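/- Fix Ω > 0 and M > 1. For an integer i ≥ 1 and u, v ∈ ℝ⁴ define the sliced propagator C^i(u,v) = ∫_{M^{−2i}}^{M^{−2(i−1)}} (Ω/(2π sinh α)²) exp( −(Ω/4) coth(α/2) ‖u‖² − (Ω/4) tanh(α/2) ‖v‖² ) dα. Then there exist constants K > 0 and c > 0, depending only on Ω and M, such that for every integer i ≥ 1 and all u, v ∈ ℝ⁴: C^i(u,v) ≤ K M^{2i} exp( −c ( M^i ‖u‖ + M^{−i} ‖v‖ ) ). -/

import Mathlib

open MeasureTheory

/-- The sliced vulcanized Φ⋆⁴₄ propagator in short/long variables: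
`C^i(u,v) = ∫_{M^{−2i}}^{M^{−2(i−1)}} (Ω/(2π sinh α)²)
  e^{−(Ω/4)coth(α/2)‖u‖² − (Ω/4)tanh(α/2)‖v‖²} dα`. -/
noncomputable def Cslice (Ω M : ℝ) (i : ℕ) (u v : EuclideanSpace ℝ (Fin 4)) : ℝ :=
  ∫ α in (M ^ (-2 * (i : ℤ)))..(M ^ (-2 * ((i : ℤ) - 1))),
    Ω / (2 * Real.pi * Real.sinh α) ^ 2 *
      Real.exp (-(Ω / 4) * (Real.cosh (α / 2) / Real.sinh (α / 2)) * ‖u‖ ^ 2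
        - Ω / 4 * Real.tanh (α / 2) * ‖v‖ ^ 2)

lemma sinh_le_mul_exp (t : ℝ) : Real.sinh t ≤ t * Real.exp t := by
  have h1 := Real.add_one_le_exp (-2*t)
  have h2 : Real.exp (-2*t) * Real.exp t = Real.exp (-t) := by
    rw [← Real.exp_add]; ring_nf
  have h3 := mul_le_mul_of_nonneg_right h1 (Real.exp_pos t).le
  rw [Real.sinh_eq]
  nlinarith [Real.exp_pos t, Real.exp_pos (-t)]

lemma exp_half_lt_two : Real.exp (1/2) < 2 := by
  have h : Real.exp (1/2) ^ 2 = Real.exp 1 := by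
    rw [← Real.exp_nat_mul]; norm_num
  nlinarith [Real.exp_pos (1/2), Real.exp_one_lt_d9]

set_option maxHeartbeats 1000000 in
/-- there are constants `K, c > 0` depending only on `Ω` and `M` such that
`C^i(u,v) ≤ K M^{2i} e^{−c(M^i‖u‖ + M^{−i}‖v‖)}` for all `i ≥ 1` and `u, v ∈ ℝ⁴`. -/
theorem stmt10 (Ω M : ℝ) (hΩ : 0 < Ω) (hM : 1 < M) :
    ∃ K > (0 : ℝ), ∃ c > (0 : ℝ), ∀ i : ℕ, 1 ≤ i → ∀ u v : EuclideanSpace ℝ (Fin 4),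
      Cslice Ω M i u v ≤
        K * M ^ (2 * i) * Real.exp (-(c * (M ^ i * ‖u‖ + M ^ (-(i : ℤ)) * ‖v‖))) := by
  have hM0 : (0:ℝ) < M := lt_trans one_pos hM
  set A : ℝ := Ω / (4 * M^2) with hA
  set B : ℝ := Ω / 16 with hB
  have hApos : 0 < A := by positivity
  have hBpos : 0 < B := by positivity
  refine ⟨Ω * M^2 / (4 * Real.pi^2) * Real.exp ((A+B)/4), by positivity,
    min A B, lt_min hApos hBpos, ?_⟩
  intro i hi u v
  set a : ℝ := M ^ (-2 * (i:ℤ)) with hadef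
  set b : ℝ := M ^ (-2 * ((i:ℤ) - 1)) with hbdef
  have ha : 0 < a := zpow_pos hM0 _
  have hb : 0 < b := zpow_pos hM0 _
  have hab : a ≤ b := zpow_le_zpow_right₀ hM.le (by omega)
  have hb1 : b ≤ 1 := by
    rw [hbdef]
    calc M ^ (-2*((i:ℤ)-1)) ≤ M ^ (0:ℤ) := zpow_le_zpow_right₀ hM.le (by omega)
      _ = 1 := zpow_zero M
  have hba : b = M^2 * a := by
    rw [hadef, hbdef, ← zpow_natCast M 2, ← zpow_add₀ hM0.ne']
    congr 1; push_cast; ring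
  have hmul : a * M ^ (2*i) = 1 := by
    have h2i : ((2*i:ℕ):ℤ) = 2*(i:ℤ) := by push_cast; ring
    rw [hadef, ← zpow_natCast M (2*i), ← zpow_add₀ hM0.ne', h2i]
    norm_num
  -- short/long variables
  set x : ℝ := M ^ i * ‖u‖ with hx
  set y : ℝ := M ^ (-(i:ℤ)) * ‖v‖ with hy
  have hx0 : 0 ≤ x := by positivity
  have hy0 : 0 ≤ y := by positivity
  have hx2 : x^2 = M^(2*i) * ‖u‖^2 := by
    rw [hx, mul_pow, ← pow_mul, mul_comm i 2]
  have hy2 : y^2 = a * ‖v‖^2 := by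
    rw [hy, mul_pow, hadef]
    congr 1
    rw [← zpow_natCast (M ^ (-(i:ℤ))) 2, ← zpow_mul]
    congr 1; ring
  -- the constant bounding the integrand
  set C₀ : ℝ := Ω / (2*Real.pi*a)^2 *
      Real.exp (-(Ω/4) * (1/b) * ‖u‖^2 - Ω/4 * (a/4) * ‖v‖^2) with hC0
  have hC0nn : 0 ≤ C₀ := by positivity
  -- pointwise bound on the integrand
  have key : ∀ α ∈ Set.Icc a b,
      Ω / (2*Real.pi*Real.sinh α)^2 *
        Real.exp (-(Ω/4) * (Real.cosh (α/2)/Real.sinh (α/2)) * ‖u‖^2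
          - Ω/4 * Real.tanh (α/2) * ‖v‖^2) ≤ C₀ := by
    rintro α ⟨hαa, hαb⟩
    have hα0 : 0 < α := lt_of_lt_of_le ha hαa
    have hα1 : α ≤ 1 := le_trans hαb hb1
    have hsinh : α ≤ Real.sinh α := Real.self_le_sinh_iff.2 hα0.le
    have hsinh2 : α/2 ≤ Real.sinh (α/2) := Real.self_le_sinh_iff.2 (by linarith)
    have hsinhpos : 0 < Real.sinh (α/2) := lt_of_lt_of_le (by linarith) hsinh2
    have hexp2 : Real.exp (α/2) ≤ 2 := by
      calc Real.exp (α/2) ≤ Real.exp (1/2) := Real.exp_le_exp.2 (by linarith)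
        _ ≤ 2 := exp_half_lt_two.le
    have hsinhup : Real.sinh (α/2) ≤ α := by
      calc Real.sinh (α/2) ≤ (α/2) * Real.exp (α/2) := sinh_le_mul_exp _
        _ ≤ (α/2) * 2 := by nlinarith
        _ = α := by ring
    have hcosh1 : (1:ℝ) ≤ Real.cosh (α/2) := Real.one_le_cosh _
    have hcoshup : Real.cosh (α/2) ≤ 2 := by
      rw [Real.cosh_eq]
      have : Real.exp (-(α/2)) ≤ Real.exp (α/2) := Real.exp_le_exp.2 (by linarith)
      nlinarith
    have hcoth : 1/b ≤ Real.cosh (α/2) / Real.sinh (α/2) := by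
      have h1 : 1/b ≤ 1/α := one_div_le_one_div_of_le hα0 hαb
      have h2 : 1/α ≤ Real.cosh (α/2)/Real.sinh (α/2) :=
        div_le_div₀ (Real.cosh_pos _).le hcosh1 hsinhpos hsinhup
      linarith
    have htanh : a/4 ≤ Real.tanh (α/2) := by
      rw [Real.tanh_eq_sinh_div_cosh]
      have h2 : (α/2)/2 ≤ Real.sinh (α/2)/Real.cosh (α/2) :=
        div_le_div₀ hsinhpos.le hsinh2 (Real.cosh_pos _) hcoshup
      linarith
    have hpref : Ω/(2*Real.pi*Real.sinh α)^2 ≤ Ω/(2*Real.pi*a)^2 := by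
      gcongr <;> linarith
    have hexple : Real.exp (-(Ω/4) * (Real.cosh (α/2)/Real.sinh (α/2)) * ‖u‖^2
          - Ω/4 * Real.tanh (α/2) * ‖v‖^2)
        ≤ Real.exp (-(Ω/4) * (1/b) * ‖u‖^2 - Ω/4 * (a/4) * ‖v‖^2) := by
      apply Real.exp_le_exp.2
      have h1 := mul_le_mul_of_nonneg_left
        (mul_le_mul_of_nonneg_right hcoth (sq_nonneg ‖u‖)) (by positivity : (0:ℝ) ≤ Ω/4)
      have h2 := mul_le_mul_of_nonneg_left
        (mul_le_mul_of_nonneg_right htanh (sq_nonneg ‖v‖)) (by positivity : (0:ℝ) ≤ Ω/4)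
      linarith [h1, h2]
    rw [hC0]
    exact mul_le_mul hpref hexple (Real.exp_pos _).le (by positivity)
  -- integrability
  have hne : ∀ α ∈ Set.uIcc a b, Real.sinh α ≠ 0 := by
    intro α hα
    rw [Set.uIcc_of_le hab] at hα
    have : 0 < α := lt_of_lt_of_le ha hα.1
    exact (Real.sinh_pos_iff.2 this).ne'
  have hne2 : ∀ α ∈ Set.uIcc a b, Real.sinh (α/2) ≠ 0 := by
    intro α hα
    rw [Set.uIcc_of_le hab] at hα
    have : 0 < α := lt_of_lt_of_le ha hα.1
    exact (Real.sinh_pos_iff.2 (by linarith)).ne'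
  have htanh : Continuous Real.tanh := by
    have h : Real.tanh = fun x : ℝ => Real.sinh x / Real.cosh x :=
      funext Real.tanh_eq_sinh_div_cosh
    rw [h]
    exact Real.continuous_sinh.div Real.continuous_cosh (fun x => (Real.cosh_pos x).ne')
  have hint : IntervalIntegrable (fun α => Ω / (2*Real.pi*Real.sinh α)^2 *
      Real.exp (-(Ω/4) * (Real.cosh (α/2)/Real.sinh (α/2)) * ‖u‖^2
        - Ω/4 * Real.tanh (α/2) * ‖v‖^2)) volume a b := by
    apply ContinuousOn.intervalIntegrable
    apply ContinuousOn.mul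
    · apply ContinuousOn.div continuousOn_const (by fun_prop)
      intro α hα
      exact pow_ne_zero _ (mul_ne_zero (by positivity) (hne α hα))
    · apply Real.continuous_exp.comp_continuousOn
      apply ContinuousOn.sub
      · exact ContinuousOn.mul (ContinuousOn.mul continuousOn_const
          (ContinuousOn.div (by fun_prop) (by fun_prop) (fun α hα => hne2 α hα)))
          continuousOn_const
      · exact ((continuous_const.mul (htanh.comp (continuous_id.div_const 2))).mul
          continuous_const).continuousOn
  -- step 1: bound the integral by (b - a) * C₀
  have step1 : Cslice Ω M i u v ≤ (b - a) * C₀ := by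
    rw [Cslice, ← hadef, ← hbdef]
    have h := intervalIntegral.integral_mono_on (μ := volume) hab hint
      intervalIntegrable_const key
    rwa [intervalIntegral.integral_const, smul_eq_mul] at h
  -- identify b * C₀
  have hbinv : 1/b = M^(2*i)/M^2 := by
    rw [hba]
    field_simp
    linear_combination (-1) * hmul
  have heq : b * C₀ = Ω*M^2/(4*Real.pi^2) * M^(2*i) *
      Real.exp (-(A*x^2 + B*y^2)) := by
    rw [hC0]
    have hexparg : -(Ω/4) * (1/b) * ‖u‖^2 - Ω/4 * (a/4) * ‖v‖^2 = -(A*x^2 + B*y^2) := by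
      rw [hbinv, hx2, hy2, hA, hB]
      field_simp
      ring
    rw [hexparg]
    have hprefeq : b * (Ω / (2*Real.pi*a)^2) = Ω*M^2/(4*Real.pi^2) * M^(2*i) := by
      rw [hba]
      field_simp
      linear_combination (-4) * hmul
    calc b * (Ω / (2*Real.pi*a)^2 * Real.exp (-(A*x^2 + B*y^2)))
        = b * (Ω / (2*Real.pi*a)^2) * Real.exp (-(A*x^2 + B*y^2)) := by ring
      _ = Ω*M^2/(4*Real.pi^2) * M^(2*i) * Real.exp (-(A*x^2 + B*y^2)) := by rw [hprefeq]
  -- exponent comparison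
  have hEbound : -(A*x^2 + B*y^2) ≤ (A+B)/4 + -(min A B * (x + y)) := by
    nlinarith [mul_nonneg hApos.le (sq_nonneg (x - 1/2)),
      mul_nonneg hBpos.le (sq_nonneg (y - 1/2)),
      mul_nonneg (sub_nonneg.2 (min_le_left A B)) hx0,
      mul_nonneg (sub_nonneg.2 (min_le_right A B)) hy0]
  calc Cslice Ω M i u v ≤ (b - a) * C₀ := step1
    _ ≤ b * C₀ := mul_le_mul_of_nonneg_right (by linarith) hC0nn
    _ = Ω*M^2/(4*Real.pi^2) * M^(2*i) * Real.exp (-(A*x^2 + B*y^2)) := heq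
    _ ≤ Ω*M^2/(4*Real.pi^2) * M^(2*i) *
        Real.exp ((A+B)/4 + -(min A B * (x + y))) := by
      apply mul_le_mul_of_nonneg_left (Real.exp_le_exp.2 hEbound) (by positivity)
    _ = Ω * M^2 / (4 * Real.pi^2) * Real.exp ((A+B)/4) * M ^ (2*i) *
        Real.exp (-(min A B * (x + y))) := by
      rw [Real.exp_add]; ring
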